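/- Let k ∈ ℕ, let M ∈ 𝔽₂^{k×k} be skew-symmetric, and let w ∈ 𝔽₂^k. Define u_{M,w} ∈ ℝ^{𝔽₂^k} by u_{M,w}(x) := 2^{−k/2}·(−1)^{Q_M(x)+wᵀx}. Then for every p ∈ 𝔽₂^k, the vector u_{M,w} satisfies the eigenvector equation (−1)^{Q_M(p)+wᵀp}·X_p Z_{Mp} u_{M,w} = u_{M,w}. -/
import Mathlib


open Matrix

/-- The quadratic form `Q_M(x) = xᵀ M̃ x` where `M̃` is the strictly upper-triangular
part of `M`. -/
def Qform (k : ℕ) (M : Matrix (Fin k) (Fin k) (ZMod 2)) (x : Fin k → ZMod 2) : ZMod 2 :=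
  x ⬝ᵥ (Matrix.of fun i j : Fin k => if (i : ℕ) < (j : ℕ) then M i j else 0).mulVec x

/-- The translation operator `(X_p f)(x) = f(x + p)` on `ℝ^{𝔽₂^k}`. -/
def Xop (k : ℕ) (p : Fin k → ZMod 2) (f : (Fin k → ZMod 2) → ℝ) :
    (Fin k → ZMod 2) → ℝ :=
  fun x => f (x + p)

/-- The modulation operator `(Z_q f)(x) = (−1)^{qᵀx}·f(x)` on `ℝ^{𝔽₂^k}`. -/
def Zop (k : ℕ) (q : Fin k → ZMod 2) (f : (Fin k → ZMod 2) → ℝ) :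
    (Fin k → ZMod 2) → ℝ :=
  fun x => (-1 : ℝ) ^ (q ⬝ᵥ x).val * f x

/-- The vector `u_{M,w} ∈ ℝ^{𝔽₂^k}` with `u_{M,w}(x) = 2^{−k/2}·(−1)^{Q_M(x)+wᵀx}`. -/
noncomputable def kerdockVec (k : ℕ) (M : Matrix (Fin k) (Fin k) (ZMod 2))
    (w : Fin k → ZMod 2) (x : Fin k → ZMod 2) : ℝ :=
  ((Real.sqrt 2)⁻¹) ^ k * (-1 : ℝ) ^ (Qform k M x + w ⬝ᵥ x).val

lemma neg_one_pow_mod (n : ℕ) : (-1 : ℝ) ^ (n % 2) = (-1 : ℝ) ^ n := by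
  conv_rhs => rw [← Nat.div_add_mod n 2, pow_add, pow_mul]
  norm_num

lemma neg_one_pow_add' (a b : ZMod 2) :
    ((-1 : ℝ)) ^ (a + b).val = (-1 : ℝ) ^ a.val * (-1 : ℝ) ^ b.val := by
  rw [ZMod.val_add, neg_one_pow_mod, pow_add]

lemma Qform_add (k : ℕ) (M : Matrix (Fin k) (Fin k) (ZMod 2))
    (hdiag : ∀ i, M i i = 0) (hsym : ∀ i j, M i j = M j i)
    (x p : Fin k → ZMod 2) :
    Qform k M (x + p) = Qform k M x + Qform k M p + x ⬝ᵥ M.mulVec p := by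
  set N : Matrix (Fin k) (Fin k) (ZMod 2) :=
    Matrix.of fun i j : Fin k => if (i : ℕ) < (j : ℕ) then M i j else 0 with hN
  have hNM : N + Nᵀ = M := by
    ext i j
    simp only [Matrix.add_apply, Matrix.transpose_apply, hN, Matrix.of_apply]
    rcases lt_trichotomy (i : ℕ) (j : ℕ) with h | h | h
    · simp [h, not_lt.mpr h.le]
    · have : i = j := Fin.ext h
      simp [this, hdiag]
    · simp [h, not_lt.mpr h.le, hsym i j]
  have hpx : p ⬝ᵥ N.mulVec x = x ⬝ᵥ Nᵀ.mulVec p := by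
    rw [Matrix.dotProduct_mulVec, ← Matrix.mulVec_transpose, dotProduct_comm]
  show (x + p) ⬝ᵥ N.mulVec (x + p) = x ⬝ᵥ N.mulVec x + p ⬝ᵥ N.mulVec p + x ⬝ᵥ M.mulVec p
  rw [Matrix.mulVec_add, add_dotProduct, dotProduct_add,
    dotProduct_add, hpx, ← hNM, Matrix.add_mulVec, dotProduct_add]
  ring

/-- For skew-symmetric `M ∈ 𝔽₂^{k×k}` and `w, p ∈ 𝔽₂^k`, the vector
`u_{M,w}` satisfies the eigenvector equation
`(−1)^{Q_M(p)+wᵀp}·X_p Z_{Mp} u_{M,w} = u_{M,w}`. -/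
theorem stmt_13 (k : ℕ) (M : Matrix (Fin k) (Fin k) (ZMod 2))
    (hdiag : ∀ i, M i i = 0) (hsym : ∀ i j, M i j = M j i)
    (w : Fin k → ZMod 2) :
    ∀ p : Fin k → ZMod 2,
      (fun x => (-1 : ℝ) ^ (Qform k M p + w ⬝ᵥ p).val *
          Xop k p (Zop k (M.mulVec p) (kerdockVec k M w)) x)
        = kerdockVec k M w := by
  intro p
  funext x
  simp only [Xop, Zop, kerdockVec]
  rw [Qform_add k M hdiag hsym x p]
  have hwd : w ⬝ᵥ (x + p) = w ⬝ᵥ x + w ⬝ᵥ p := dotProduct_add w x p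
  rw [hwd]
  have hpp : M.mulVec p ⬝ᵥ p = 0 := by
    have h := Qform_add k M hdiag hsym p p
    have hp0 : p + p = 0 := by funext i; exact CharTwo.add_self_eq_zero _
    have hq0 : Qform k M 0 = 0 := by simp [Qform]
    rw [hp0, hq0] at h
    have := h.symm
    rw [CharTwo.add_self_eq_zero, zero_add, dotProduct_comm] at this
    exact this
  rw [dotProduct_add, hpp, add_zero,
    show M.mulVec p ⬝ᵥ x = x ⬝ᵥ M.mulVec p from dotProduct_comm _ _]
  simp only [neg_one_pow_add']
  have h2 : ∀ a : ZMod 2, ((-1 : ℝ)) ^ a.val * (-1 : ℝ) ^ a.val = 1 := by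
    intro a
    rw [← pow_add, ← neg_one_pow_mod]
    have : (a.val + a.val) % 2 = 0 := by omega
    rw [this, pow_zero]
  have h3 : ∀ n : ℕ, (-1 : ℝ) ^ (n * 2) = 1 := by
    intro n; rw [mul_comm, pow_mul]; norm_num
  ring_nf
  simp only [h3]
  ring
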